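/- Log-convexity of the Ornstein–Uhlenbeck semigroup P_t with covariance Q: for every Borel function g : ℝⁿ → [0, ∞], every t > 0, every x₀, x₁ ∈ ℝⁿ and every s ∈ [0,1], one has P_t g((1−s)x₀ + s x₁) ≤ exp( s(1−s) |x₁ − x₀|² / (2t) ) · (P_t g(x₀))^{1−s} · (P_t g(x₁))^{s}, the inequality being understood in [0, ∞]. -/

import Mathlib

open MeasureTheory Real ENNReal

/-- The centered Gaussian measure on `EuclideanSpace ℝ (Fin n)` with (positive-definite)
covariance matrix `S`, defined through its density with respect to Lebesgue measure. -/
noncomputable def gaussianCov {n : ℕ} (S : Matrix (Fin n) (Fin n) ℝ) :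
    Measure (EuclideanSpace ℝ (Fin n)) :=
  MeasureTheory.volume.withDensity fun x =>
    ENNReal.ofReal (((2 * Real.pi) ^ (n : ℝ) * S.det) ^ (-(1 / 2 : ℝ))
      * Real.exp (-(inner ℝ x (Matrix.toEuclideanLin S⁻¹ x) : ℝ) / 2))

/-- The Ornstein–Uhlenbeck semigroup with covariance `Q` applied to a `[0,∞]`-valued function:
with `A := −Q⁻¹/2` and `Q_t := Q(I − exp(2tA))`,
`P_t g (x) = ∫ g(exp(tA) x + y) dN(0,Q_t)(y)`. -/
noncomputable def ouSemigroup {n : ℕ} (Q : Matrix (Fin n) (Fin n) ℝ) (t : ℝ)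
    (g : EuclideanSpace ℝ (Fin n) → ℝ≥0∞) (x : EuclideanSpace ℝ (Fin n)) : ℝ≥0∞ :=
  ∫⁻ y, g (Matrix.toEuclideanLin (NormedSpace.exp (t • (-(2 : ℝ)⁻¹ • Q⁻¹))) x + y)
    ∂(gaussianCov (Q * (1 - NormedSpace.exp ((2 * t) • (-(2 : ℝ)⁻¹ • Q⁻¹)))))

open Matrix NormedSpace

private lemma expQform {n : ℕ} {Q : Matrix (Fin n) (Fin n) ℝ} (hQ : Q.PosDef) {t : ℝ}
    (ht : 0 < t) (w : Fin n → ℝ) :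
    t * (w ⬝ᵥ w) ≤ w ⬝ᵥ ((NormedSpace.exp (t • Q⁻¹) * Q - Q) *ᵥ w) := by
  letI : SeminormedRing (Matrix (Fin n) (Fin n) ℝ) := Matrix.linftyOpSemiNormedRing
  letI : NormedRing (Matrix (Fin n) (Fin n) ℝ) := Matrix.linftyOpNormedRing
  letI : NormedAlgebra ℝ (Matrix (Fin n) (Fin n) ℝ) := Matrix.linftyOpNormedAlgebra
  set R := Q⁻¹ with hRdef
  let L0 : Matrix (Fin n) (Fin n) ℝ →ₗ[ℝ] ℝ :=
  { toFun := fun N => w ⬝ᵥ ((N * Q) *ᵥ w)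
    map_add' := by intros; simp [add_mul, add_mulVec, dotProduct_add]
    map_smul' := by intros; simp [smul_mul_assoc, smul_mulVec, dotProduct_smul] }
  let L : Matrix (Fin n) (Fin n) ℝ →L[ℝ] ℝ := ⟨L0, L0.continuous_of_finiteDimensional⟩
  have hsum : Summable (fun k : ℕ => ((k.factorial : ℝ))⁻¹ • (t • R) ^ k) := expSeries_summable' _
  have hexp : w ⬝ᵥ ((NormedSpace.exp (t • R) * Q) *ᵥ w) = ∑' k : ℕ, L (((k.factorial : ℝ))⁻¹ • (t • R) ^ k) := by
    have h1 : w ⬝ᵥ ((NormedSpace.exp (t • R) * Q) *ᵥ w) = L (NormedSpace.exp (t • R)) := rfl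
    rw [h1, NormedSpace.exp_eq_tsum ℝ, L.map_tsum hsum]
  have hterm : ∀ k : ℕ, L (((k.factorial : ℝ))⁻¹ • (t • R) ^ k)
      = ((k.factorial : ℝ))⁻¹ * t ^ k * (w ⬝ᵥ ((R ^ k * Q) *ᵥ w)) := by
    intro k
    show w ⬝ᵥ (((((k.factorial : ℝ))⁻¹ • (t • R) ^ k) * Q) *ᵥ w) = _
    rw [smul_pow, smul_smul, smul_mul_assoc, smul_mulVec, dotProduct_smul]
    simp [smul_eq_mul, mul_assoc]
  have hpsd : ∀ k : ℕ, (R ^ k * Q).PosSemidef := by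
    intro k
    cases k with
    | zero => simpa using hQ.posSemidef
    | succ k =>
      have h : R ^ (k + 1) * Q = R ^ k := by
        rw [pow_succ, mul_assoc, hRdef, nonsing_inv_mul Q hQ.det_pos.ne'.isUnit, mul_one]
      rw [h]; exact (hQ.inv.posSemidef).pow k
  have hpos : ∀ k : ℕ, 0 ≤ L (((k.factorial : ℝ))⁻¹ • (t • R) ^ k) := by
    intro k
    rw [hterm k]
    have := (hpsd k).dotProduct_mulVec_nonneg w
    simp only [RCLike.star_def, starRingEnd_apply, star_trivial] at this
    positivity
  have hLsum : Summable fun k : ℕ => L (((k.factorial : ℝ))⁻¹ • (t • R) ^ k) :=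
    hsum.map L.toLinearMap.toAddMonoidHom L.continuous
  have h01 : L (((0 : ℕ).factorial : ℝ)⁻¹ • (t • R) ^ 0) + L (((1 : ℕ).factorial : ℝ)⁻¹ • (t • R) ^ 1)
      ≤ ∑' k : ℕ, L (((k.factorial : ℝ))⁻¹ • (t • R) ^ k) := by
    have := Summable.sum_le_tsum ({0, 1} : Finset ℕ) (fun k _ => hpos k) hLsum
    simpa using this
  have h0 : L (((0 : ℕ).factorial : ℝ)⁻¹ • (t • R) ^ 0) = w ⬝ᵥ (Q *ᵥ w) := by
    rw [hterm]; simp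
  have h1 : L (((1 : ℕ).factorial : ℝ)⁻¹ • (t • R) ^ 1) = t * (w ⬝ᵥ w) := by
    rw [hterm]
    simp [hRdef, nonsing_inv_mul Q hQ.det_pos.ne'.isUnit]
  rw [sub_mulVec, dotProduct_sub, hexp]
  rw [h0, h1] at h01
  linarith

private lemma binner {n : ℕ} (N : Matrix (Fin n) (Fin n) ℝ) (x y : EuclideanSpace ℝ (Fin n)) :
    (inner ℝ x (Matrix.toEuclideanLin N y) : ℝ)
      = (WithLp.equiv 2 (Fin n → ℝ) x) ⬝ᵥ N.mulVec (WithLp.equiv 2 (Fin n → ℝ) y) := by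
  simp [PiLp.inner_apply, Matrix.toEuclideanLin_apply, dotProduct, mul_comm]

private lemma fcomp {n : ℕ} (A B : Matrix (Fin n) (Fin n) ℝ) (x : EuclideanSpace ℝ (Fin n)) :
    Matrix.toEuclideanLin A (Matrix.toEuclideanLin B x) = Matrix.toEuclideanLin (A * B) x := by
  simp [Matrix.toEuclideanLin_apply, Matrix.mulVec_mulVec]

private lemma Mfacts {n : ℕ} {Q : Matrix (Fin n) (Fin n) ℝ} (hQ : Q.PosDef) {t : ℝ}
    (ht : 0 < t) :
    0 < (Q * (1 - NormedSpace.exp ((2 * t) • (-(2 : ℝ)⁻¹ • Q⁻¹)))).det ∧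
    ∀ v : EuclideanSpace ℝ (Fin n),
    (inner ℝ (Matrix.toEuclideanLin (NormedSpace.exp (t • (-(2 : ℝ)⁻¹ • Q⁻¹))) v)
      (Matrix.toEuclideanLin (Q * (1 - NormedSpace.exp ((2 * t) • (-(2 : ℝ)⁻¹ • Q⁻¹))))⁻¹
        (Matrix.toEuclideanLin (NormedSpace.exp (t • (-(2 : ℝ)⁻¹ • Q⁻¹))) v)) : ℝ) ≤ ‖v‖ ^ 2 / t := by
  letI : SeminormedRing (Matrix (Fin n) (Fin n) ℝ) := Matrix.linftyOpSemiNormedRing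
  letI : NormedRing (Matrix (Fin n) (Fin n) ℝ) := Matrix.linftyOpNormedRing
  letI : NormedAlgebra ℝ (Matrix (Fin n) (Fin n) ℝ) := Matrix.linftyOpNormedAlgebra
  set R := Q⁻¹ with hRdef
  have hQdet : IsUnit Q.det := hQ.det_pos.ne'.isUnit
  have hRherm : R.IsHermitian := hQ.1.inv
  have hcQR : Commute Q R := by
    unfold R
    show Q * Q⁻¹ = Q⁻¹ * Q
    rw [Matrix.mul_nonsing_inv _ hQdet, Matrix.nonsing_inv_mul _ hQdet]
  have hcomm : ∀ a b : ℝ, Commute (a • R) (b • R) :=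
    fun a b => ((Commute.refl R).smul_left a).smul_right b
  have hexp_mul : ∀ a b : ℝ, NormedSpace.exp (a • R) * NormedSpace.exp (b • R) = NormedSpace.exp ((a + b) • R) := by
    intro a b
    rw [← Matrix.exp_add_of_commute (a • R) (b • R) (hcomm a b), add_smul]
  have hQexp : ∀ a : ℝ, Commute Q (NormedSpace.exp (a • R)) :=
    fun a => (hcQR.smul_right a).exp_right
  have hsmulherm : ∀ a : ℝ, (a • R).IsHermitian := fun a => by
    show (a • R)ᴴ = a • R
    rw [Matrix.conjTranspose_smul, hRherm.eq, star_trivial]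
  have hP : t • (-(2 : ℝ)⁻¹ • R) = (-(t / 2)) • R := by module
  have hEsm : (2 * t) • (-(2 : ℝ)⁻¹ • R) = (-t) • R := by module
  rw [hP, hEsm]
  set P := NormedSpace.exp ((-(t / 2)) • R) with hPdef
  set E := NormedSpace.exp ((-t) • R) with hEdef
  set X := NormedSpace.exp (t • R) with hXdef
  set Y := NormedSpace.exp ((t / 2) • R) with hYdef
  have hXdet : IsUnit X.det := (Matrix.isUnit_iff_isUnit_det _).mp (Matrix.isUnit_exp _)
  have hEX : E * X = 1 := by rw [hEdef, hXdef, hexp_mul, neg_add_cancel, zero_smul, NormedSpace.exp_zero]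
  have hEinv : E⁻¹ = X := by
    rw [hEdef, neg_smul, Matrix.exp_neg, ← hXdef, Matrix.nonsing_inv_nonsing_inv _ hXdet]
  set M' := X * Q - Q with hM'def
  have hM'bound : ∀ w : Fin n → ℝ, t * (w ⬝ᵥ w) ≤ w ⬝ᵥ (M' *ᵥ w) := fun w => expQform hQ ht w
  have hM'herm : M'.IsHermitian := by
    have hXherm : X.IsHermitian := by
      exact Matrix.IsHermitian.exp (hsmulherm t)
    have : (X * Q).IsHermitian := by
      show (X * Q)ᴴ = X * Q
      rw [Matrix.conjTranspose_mul, hXherm.eq, hQ.1.eq, (hQexp t).symm.eq]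
    exact this.sub hQ.1
  have hM'pd : M'.PosDef := by
    refine Matrix.PosDef.of_dotProduct_mulVec_pos hM'herm fun x hx => ?_
    have h1 := hM'bound x
    have h2 : (0 : ℝ) < x ⬝ᵥ x := by
      have := Matrix.dotProduct_star_self_pos_iff (v := x).mpr hx
      simpa using this
    simp only [star_trivial]
    calc (0 : ℝ) < t * (x ⬝ᵥ x) := by positivity
    _ ≤ x ⬝ᵥ (M' *ᵥ x) := h1
  have hM'det : IsUnit M'.det := hM'pd.det_pos.ne'.isUnit
  have hM : Q * (1 - E) = E * M' := by
    have h1 : E * (X * Q) = Q := by rw [← mul_assoc, hEX, one_mul]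
    have h2 : Q * E = E * Q := (hQexp (-t)).eq
    calc Q * (1 - E) = Q - Q * E := by rw [mul_sub, mul_one]
    _ = E * (X * Q) - E * Q := by rw [h1, h2]
    _ = E * (X * Q - Q) := by rw [mul_sub]
  have hXP : X * P = Y := by rw [hXdef, hPdef, hYdef, hexp_mul]; congr 1; module
  have hPY : P * Y = 1 := by rw [hPdef, hYdef, hexp_mul, neg_add_cancel, zero_smul, NormedSpace.exp_zero]
  have hcYM' : Commute Y M' := by
    have hYX : Commute Y X := by
      show Y * X = X * Y
      rw [hYdef, hXdef, hexp_mul, hexp_mul, add_comm]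
    have hYQ : Commute Y Q := (hQexp (t / 2)).symm
    exact (hYX.mul_right hYQ).sub_right hYQ
  have hcYM'inv : M'⁻¹ * Y = Y * M'⁻¹ := by
    calc M'⁻¹ * Y = M'⁻¹ * Y * (M' * M'⁻¹) := by
          rw [Matrix.mul_nonsing_inv _ hM'det, mul_one]
    _ = M'⁻¹ * (Y * M') * M'⁻¹ := by noncomm_ring
    _ = M'⁻¹ * (M' * Y) * M'⁻¹ := by rw [hcYM'.eq]
    _ = (M'⁻¹ * M') * (Y * M'⁻¹) := by noncomm_ring
    _ = Y * M'⁻¹ := by rw [Matrix.nonsing_inv_mul _ hM'det, one_mul]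
  constructor
  · -- determinant positivity
    have hPdet : IsUnit P.det := (Matrix.isUnit_iff_isUnit_det _).mp (Matrix.isUnit_exp _)
    have hEPP : P * P = E := by rw [hPdef, hEdef, hexp_mul]; congr 1; module
    have hdetE : 0 < E.det := by
      rw [← hEPP, Matrix.det_mul]
      exact mul_self_pos.mpr hPdet.ne_zero
    rw [hM, Matrix.det_mul]
    exact mul_pos hdetE hM'pd.det_pos
  intro v
  have hPMP : P * ((Q * (1 - E))⁻¹ * P) = M'⁻¹ := by
    rw [hM, Matrix.mul_inv_rev, hEinv]
    calc P * (M'⁻¹ * X * P) = P * (M'⁻¹ * (X * P)) := by rw [mul_assoc]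
    _ = P * (M'⁻¹ * Y) := by rw [hXP]
    _ = P * Y * M'⁻¹ := by rw [hcYM'inv, mul_assoc]
    _ = M'⁻¹ := by rw [hPY, one_mul]
  -- reduce to quadratic form of M'⁻¹
  have hPherm : Pᴴ = P := Matrix.IsHermitian.exp (hsmulherm _)
  have hstep : (inner ℝ (Matrix.toEuclideanLin P v)
      (Matrix.toEuclideanLin (Q * (1 - E))⁻¹ (Matrix.toEuclideanLin P v)) : ℝ)
      = (inner ℝ v (Matrix.toEuclideanLin M'⁻¹ v) : ℝ) := by
    rw [fcomp]
    have hadj : Matrix.toEuclideanLin P = LinearMap.adjoint (Matrix.toEuclideanLin P) := by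
      rw [← Matrix.toEuclideanLin_conjTranspose_eq_adjoint, hPherm]
    conv_lhs => rw [hadj]
    rw [LinearMap.adjoint_inner_left, fcomp, hPMP]
  rw [hstep]
  -- final scalar inequality
  set w := Matrix.toEuclideanLin M'⁻¹ v with hwdef
  have hv : Matrix.toEuclideanLin M' w = v := by
    rw [hwdef, fcomp, Matrix.mul_nonsing_inv _ hM'det]
    simp [Matrix.toEuclideanLin_apply]
  have h1 : t * ‖w‖ ^ 2 ≤ (inner ℝ w v : ℝ) := by
    have := hM'bound (WithLp.equiv 2 (Fin n → ℝ) w)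
    have h2 : (inner ℝ w (Matrix.toEuclideanLin M' w) : ℝ)
        = (WithLp.equiv 2 (Fin n → ℝ) w) ⬝ᵥ M'.mulVec (WithLp.equiv 2 (Fin n → ℝ) w) :=
      binner M' w w
    have h3 : (WithLp.equiv 2 (Fin n → ℝ) w) ⬝ᵥ (WithLp.equiv 2 (Fin n → ℝ) w)
        = (inner ℝ w w : ℝ) := by
      simp only [PiLp.inner_apply, dotProduct, WithLp.equiv_apply, RCLike.inner_apply, conj_trivial]
    rw [hv] at h2
    rw [← h2, h3, real_inner_self_eq_norm_sq] at this
    exact this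
  have h2 : (inner ℝ w v : ℝ) ≤ ‖w‖ * ‖v‖ := real_inner_le_norm w v
  have hgoal : (inner ℝ v w : ℝ) ≤ ‖v‖ ^ 2 / t := by
    rw [real_inner_comm]
    rcases eq_or_ne w 0 with hw | hw
    · simp [hw]
      positivity
    · have hwpos : 0 < ‖w‖ := norm_pos_iff.mpr hw
      have htw : t * ‖w‖ ≤ ‖v‖ := by
        have := h1.trans h2
        nlinarith
      have hwle : ‖w‖ ≤ ‖v‖ / t := (le_div_iff₀ ht).mpr (by linarith)
      calc (inner ℝ w v : ℝ) ≤ ‖w‖ * ‖v‖ := h2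
      _ ≤ (‖v‖ / t) * ‖v‖ := mul_le_mul_of_nonneg_right hwle (norm_nonneg v)
      _ = ‖v‖ ^ 2 / t := by ring
  exact hgoal

private lemma enn_helper {x y : ℝ} (hx : 0 < x) (hy : 0 < y) {s : ℝ} (hs0 : 0 ≤ s)
    (hs1 : s ≤ 1) (gz : ℝ≥0∞) :
    (ENNReal.ofReal x * gz) ^ (1 - s) * (ENNReal.ofReal y * gz) ^ s
      = ENNReal.ofReal (x ^ (1 - s) * y ^ s) * gz := by
  rw [ENNReal.mul_rpow_of_nonneg _ _ (by linarith), ENNReal.mul_rpow_of_nonneg _ _ hs0,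
      ENNReal.ofReal_rpow_of_pos hx, ENNReal.ofReal_rpow_of_pos hy,
      ENNReal.ofReal_mul (by positivity), mul_mul_mul_comm,
      ← ENNReal.rpow_add_of_nonneg _ _ (by linarith) hs0, sub_add_cancel, ENNReal.rpow_one]


/-- Lemma 3.2 of the paper (log-convexity of `P_t`) in the finite-dimensional Gaussian setting:
for `Q` symmetric positive-definite, every Borel `g : ℝⁿ → [0,∞]`, `t > 0`, `x₀, x₁ ∈ ℝⁿ` and
`s ∈ [0,1]`,
`P_t g((1−s)x₀ + s x₁) ≤ exp(s(1−s)|x₁ − x₀|²/(2t)) (P_t g(x₀))^{1−s} (P_t g(x₁))^s`. -/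
theorem stmt_8 (n : ℕ) (Q : Matrix (Fin n) (Fin n) ℝ) (hQ : Q.PosDef)
    (g : EuclideanSpace ℝ (Fin n) → ℝ≥0∞) (hg : Measurable g)
    (t : ℝ) (ht : 0 < t) (x₀ x₁ : EuclideanSpace ℝ (Fin n)) (s : ℝ) (hs : s ∈ Set.Icc 0 1) :
    ouSemigroup Q t g ((1 - s) • x₀ + s • x₁)
      ≤ ENNReal.ofReal (Real.exp (s * (1 - s) * ‖x₁ - x₀‖ ^ 2 / (2 * t)))
        * (ouSemigroup Q t g x₀) ^ (1 - s) * (ouSemigroup Q t g x₁) ^ s := by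

  obtain ⟨hs0, hs1⟩ := hs
  have hs1' : 0 ≤ 1 - s := by linarith
  obtain ⟨hdet, hqb⟩ := Mfacts hQ ht
  set fP := Matrix.toEuclideanLin (NormedSpace.exp (t • (-(2 : ℝ)⁻¹ • Q⁻¹))) with hfPdef
  set M := Q * (1 - NormedSpace.exp ((2 * t) • (-(2 : ℝ)⁻¹ • Q⁻¹))) with hMdef
  set c := ((2 * Real.pi) ^ (n : ℝ) * M.det) ^ (-(1 / 2 : ℝ)) with hcdef
  have hc0 : 0 < c :=
    Real.rpow_pos_of_pos (mul_pos (Real.rpow_pos_of_pos (by positivity) _) hdet) _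
  set T := Matrix.toEuclideanLin M⁻¹ with hTdef
  set φ : EuclideanSpace ℝ (Fin n) → ℝ≥0∞ :=
    fun y => ENNReal.ofReal (c * Real.exp (-(inner ℝ y (T y) : ℝ) / 2)) with hφdef
  have hφm : Measurable φ := by
    have hTc : Continuous T := T.continuous_of_finiteDimensional
    exact ENNReal.measurable_ofReal.comp
      (continuous_const.mul (Real.continuous_exp.comp
        ((continuous_id.inner hTc).neg.div_const 2))).measurable
  have key : ∀ x, ouSemigroup Q t g x = ∫⁻ z, φ (z - fP x) * g z := by
    intro x
    have h0 : ouSemigroup Q t g x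
        = ∫⁻ y, g (fP x + y) ∂(MeasureTheory.volume.withDensity φ) := rfl
    have hgm' : Measurable fun y => g (fP x + y) := hg.comp (measurable_id.const_add (fP x))
    rw [h0, lintegral_withDensity_eq_lintegral_mul MeasureTheory.volume hφm hgm']
    rw [← lintegral_add_right_eq_self (fun z => φ (z - fP x) * g z) (fP x)]
    refine lintegral_congr fun y => ?_
    simp only [Pi.mul_apply]
    rw [add_sub_cancel_right, add_comm]
  rw [key, key, key]
  set K := Real.exp (s * (1 - s) * ‖x₁ - x₀‖ ^ 2 / (2 * t)) with hKdef
  have hexp_rpow : ∀ (u θ : ℝ), Real.exp u ^ θ = Real.exp (θ * u) := by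
    intro u θ
    rw [← Real.exp_mul, mul_comm]
  have hcc : c ^ (1 - s) * c ^ s = c := by
    rw [← Real.rpow_add hc0, sub_add_cancel, Real.rpow_one]
  have pointkey : ∀ (a b : EuclideanSpace ℝ (Fin n)) (gz : ℝ≥0∞),
      (inner ℝ (a - b) (T (a - b)) : ℝ) ≤ ‖x₁ - x₀‖ ^ 2 / t →
      φ ((1 - s) • a + s • b) * gz
        ≤ ENNReal.ofReal K * ((φ a * gz) ^ (1 - s) * (φ b * gz) ^ s) := by
    intro a b gz hqd_le
    set qa := (inner ℝ a (T a) : ℝ) with hqadef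
    set qb2 := (inner ℝ b (T b) : ℝ) with hqb2def
    set qd := (inner ℝ (a - b) (T (a - b)) : ℝ) with hqddef
    have hquad : (inner ℝ ((1 - s) • a + s • b) (T ((1 - s) • a + s • b)) : ℝ)
        = (1 - s) * qa + s * qb2 - s * (1 - s) * qd := by
      rw [hqadef, hqb2def, hqddef]
      simp only [map_add, _root_.map_smul, map_sub, inner_add_left, inner_add_right,
        inner_sub_left, inner_sub_right, real_inner_smul_left, real_inner_smul_right]
      ring
    have h1 : s * (1 - s) * qd / 2 ≤ s * (1 - s) * ‖x₁ - x₀‖ ^ 2 / (2 * t) := by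
      have h2 : s * (1 - s) * qd ≤ s * (1 - s) * (‖x₁ - x₀‖ ^ 2 / t) :=
        mul_le_mul_of_nonneg_left hqd_le (by nlinarith)
      calc s * (1 - s) * qd / 2 ≤ s * (1 - s) * (‖x₁ - x₀‖ ^ 2 / t) / 2 := by linarith
      _ = s * (1 - s) * ‖x₁ - x₀‖ ^ 2 / (2 * t) := by ring
    have hprod : (c * Real.exp (-qa / 2)) ^ (1 - s) * (c * Real.exp (-qb2 / 2)) ^ s
        = c * Real.exp ((1 - s) * (-qa / 2) + s * (-qb2 / 2)) := by
      rw [Real.mul_rpow hc0.le (Real.exp_pos _).le, Real.mul_rpow hc0.le (Real.exp_pos _).le,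
        hexp_rpow, hexp_rpow, mul_mul_mul_comm, hcc, ← Real.exp_add]
    have hlhs : c * Real.exp (-((1 - s) * qa + s * qb2 - s * (1 - s) * qd) / 2)
        = Real.exp (s * (1 - s) * qd / 2)
          * (c * Real.exp ((1 - s) * (-qa / 2) + s * (-qb2 / 2))) := by
      rw [show -((1 - s) * qa + s * qb2 - s * (1 - s) * qd) / 2
          = s * (1 - s) * qd / 2 + ((1 - s) * (-qa / 2) + s * (-qb2 / 2)) from by ring,
        Real.exp_add]
      ring
    have hreal : c * Real.exp (-((1 - s) * qa + s * qb2 - s * (1 - s) * qd) / 2)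
        ≤ K * ((c * Real.exp (-qa / 2)) ^ (1 - s) * (c * Real.exp (-qb2 / 2)) ^ s) := by
      rw [hprod, hlhs]
      exact mul_le_mul_of_nonneg_right (Real.exp_le_exp.mpr h1) (by positivity)
    calc φ ((1 - s) • a + s • b) * gz
        = ENNReal.ofReal (c * Real.exp (-((1 - s) * qa + s * qb2 - s * (1 - s) * qd) / 2)) * gz := by
          simp only [hφdef]
          rw [hquad]
    _ ≤ ENNReal.ofReal (K * ((c * Real.exp (-qa / 2)) ^ (1 - s) * (c * Real.exp (-qb2 / 2)) ^ s)) * gz :=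
          mul_le_mul_left (ENNReal.ofReal_le_ofReal hreal) _
    _ = ENNReal.ofReal K
          * (ENNReal.ofReal ((c * Real.exp (-qa / 2)) ^ (1 - s) * (c * Real.exp (-qb2 / 2)) ^ s) * gz) := by
          rw [ENNReal.ofReal_mul (by positivity), mul_assoc]
    _ = ENNReal.ofReal K * ((ENNReal.ofReal (c * Real.exp (-qa / 2)) * gz) ^ (1 - s)
          * (ENNReal.ofReal (c * Real.exp (-qb2 / 2)) * gz) ^ s) := by
          rw [enn_helper (by positivity) (by positivity) hs0 hs1]
    _ = ENNReal.ofReal K * ((φ a * gz) ^ (1 - s) * (φ b * gz) ^ s) := by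
          simp only [hφdef, hqadef, hqb2def]
  have pointwise : ∀ z, φ (z - fP ((1 - s) • x₀ + s • x₁)) * g z
      ≤ ENNReal.ofReal K * ((φ (z - fP x₀) * g z) ^ (1 - s) * (φ (z - fP x₁) * g z) ^ s) := by
    intro z
    have hd : (z - fP x₀) - (z - fP x₁) = fP (x₁ - x₀) := by
      rw [map_sub]
      abel
    have h := pointkey (z - fP x₀) (z - fP x₁) (g z) (by rw [hd]; exact hqb _)
    have hab : ((1 - s) • (z - fP x₀) + s • (z - fP x₁)) = z - fP ((1 - s) • x₀ + s • x₁) := by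
      rw [map_add, _root_.map_smul, _root_.map_smul]
      module
    rwa [hab] at h
  have hFm : Measurable fun z => φ (z - fP x₀) * g z :=
    (hφm.comp (measurable_id.sub measurable_const)).mul hg
  have hGm : Measurable fun z => φ (z - fP x₁) * g z :=
    (hφm.comp (measurable_id.sub measurable_const)).mul hg
  calc ∫⁻ z, φ (z - fP ((1 - s) • x₀ + s • x₁)) * g z
      ≤ ∫⁻ z, ENNReal.ofReal K
          * ((φ (z - fP x₀) * g z) ^ (1 - s) * (φ (z - fP x₁) * g z) ^ s) :=
        lintegral_mono pointwise
  _ = ENNReal.ofReal K * ∫⁻ z, (φ (z - fP x₀) * g z) ^ (1 - s) * (φ (z - fP x₁) * g z) ^ s := by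
        exact lintegral_const_mul _ ((hFm.pow_const _).mul (hGm.pow_const _))
  _ ≤ ENNReal.ofReal K * ((∫⁻ z, φ (z - fP x₀) * g z) ^ (1 - s)
        * (∫⁻ z, φ (z - fP x₁) * g z) ^ s) :=
        mul_le_mul_right (ENNReal.lintegral_mul_norm_pow_le hFm.aemeasurable
          hGm.aemeasurable hs1' hs0 (by ring)) _
  _ = ENNReal.ofReal K * (∫⁻ z, φ (z - fP x₀) * g z) ^ (1 - s)
        * (∫⁻ z, φ (z - fP x₁) * g z) ^ s := by
        rw [mul_assoc]
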